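/- arXiv:2110.12604 — 2 statements merged into one kernel-verified Lean document; each statement's English description precedes it below -/
import Mathlib

section
/- Let U ∈ C²([−h,0]) with U' > 0, let k ∈ ℝ, and let c ∈ ℝ \ U((−h,0)) (i.e., c is real and not in the open range of U on (−h,0)). Suppose y : [x₂ₗ, x₂ᵣ] → ℝ is a C² solution of (U−c)(−y'' + k²y) + U''y = 0 on an interval I = (x₂ₗ, x₂ᵣ) ⊂ [−h,0] with c ∉ U(I), and suppose y(x₂₀) = 0, y'(x₂₀) ≠ 0 at some endpoint x₂₀ of the closed interval with U(x₂₀) ≠ c. Then y(x₂) ≠ 0 for every x₂ in the closed interval other than x₂₀. -/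
open Set Filter

lemma aux_left (k c a b : ℝ) (hab : a < b) (U y : ℝ → ℝ)
    (hU : ContDiff ℝ 2 U) (hy : ContDiff ℝ 2 y)
    (hnz : ∀ x ∈ Set.Ico a b, U x ≠ c)
    (heq : ∀ x ∈ Set.Ioo a b,
      (U x - c) * (-(deriv (deriv y) x) + k ^ 2 * y x) + deriv (deriv U) x * y x = 0)
    (hya : y a = 0) (hyb : y b = 0) (hUb : deriv U b ≠ 0) :
    deriv y a = 0 := by
  have h21 : (2 : WithTop ℕ∞) = 1 + 1 := by norm_num
  have hUd : Differentiable ℝ U := hU.differentiable (by norm_num)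
  have hyd : Differentiable ℝ y := hy.differentiable (by norm_num)
  have hU1 : ContDiff ℝ 1 (deriv U) := ((contDiff_succ_iff_deriv).mp (h21 ▸ hU)).2.2
  have hy1 : ContDiff ℝ 1 (deriv y) := ((contDiff_succ_iff_deriv).mp (h21 ▸ hy)).2.2
  have hUd1 : Differentiable ℝ (deriv U) := hU1.differentiable (by norm_num)
  have hyd1 : Differentiable ℝ (deriv y) := hy1.differentiable (by norm_num)
  set w : ℝ → ℝ := fun x => deriv y x * y x - deriv U x * (y x) ^ 2 / (U x - c) with hw
  set g : ℝ → ℝ := fun x =>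
    k ^ 2 * (y x) ^ 2 + (deriv y x - deriv U x * y x / (U x - c)) ^ 2 with hg
  -- derivative of w
  have hwderiv : ∀ x ∈ Set.Ioo a b, HasDerivAt w (g x) x := by
    intro x hx
    have hax : U x - c ≠ 0 := sub_ne_zero.mpr (hnz x ⟨le_of_lt hx.1, hx.2⟩)
    have h1 : HasDerivAt (fun t => deriv y t * y t)
        (deriv (deriv y) x * y x + deriv y x * deriv y x) x :=
      ((hyd1 x).hasDerivAt).mul ((hyd x).hasDerivAt)
    have h2 : HasDerivAt (fun t => deriv U t * (y t) ^ 2 / (U t - c))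
        (((deriv (deriv U) x * (y x) ^ 2 + deriv U x * ((2 : ℕ) * y x ^ 1 * deriv y x)) * (U x - c)
          - deriv U x * (y x) ^ 2 * deriv U x) / (U x - c) ^ 2) x := by
      have hnum : HasDerivAt (fun t => deriv U t * (y t) ^ 2)
          (deriv (deriv U) x * (y x) ^ 2 + deriv U x * ((2 : ℕ) * y x ^ 1 * deriv y x)) x :=
        ((hUd1 x).hasDerivAt).mul (((hyd x).hasDerivAt).pow 2)
      have hden : HasDerivAt (fun t => U t - c) (deriv U x) x :=
        ((hUd x).hasDerivAt).sub_const c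
      exact hnum.div hden hax
    have h3 := h1.sub h2
    refine h3.congr_deriv ?_
    symm
    have hode := heq x hx
    have hv2 : deriv (deriv y) x * (U x - c)
        = k ^ 2 * y x * (U x - c) + deriv (deriv U) x * y x := by ring_nf; ring_nf at hode; linarith
    rw [hg]
    field_simp
    linear_combination (-(y x) * (U x - c)) * hv2
  have hgnn : ∀ x, 0 ≤ g x := by
    intro x; simp only [hg]; positivity
  have hwa : w a = 0 := by simp [hw, hya]
  have hwcont : ∀ s ⊆ {x | U x ≠ c}, ContinuousOn w s := by
    intro s hs
    apply ContinuousOn.sub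
    · exact hy1.continuous.continuousOn.mul hyd.continuous.continuousOn
    · apply ContinuousOn.div
      · exact hU1.continuous.continuousOn.mul (hyd.continuous.pow 2).continuousOn
      · exact (hUd.continuous.sub continuous_const).continuousOn
      · intro x hx; exact sub_ne_zero.mpr (hs hx)
  have hmono : MonotoneOn w (Set.Ico a b) := by
    apply monotoneOn_of_deriv_nonneg (convex_Ico a b)
    · exact hwcont _ (fun x hx => hnz x hx)
    · intro x hx
      rw [interior_Ico] at hx
      exact (hwderiv x hx).differentiableAt.differentiableWithinAt
    · intro x hx
      rw [interior_Ico] at hx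
      rw [(hwderiv x hx).deriv]
      exact hgnn x
  -- key claim: w vanishes on Ico a b
  have hw0 : ∀ x ∈ Set.Ico a b, w x = 0 := by
    by_cases hUbc : U b = c
    · -- degenerate endpoint: limit argument
      by_contra hcon
      push_neg at hcon
      obtain ⟨x1, hx1, hwx1⟩ := hcon
      have hwx1pos : 0 < w x1 := by
        rcases lt_or_gt_of_ne hwx1 with h | h
        · exact absurd (hmono ⟨le_rfl, hab⟩ hx1 hx1.1) (by linarith [hwa])
        · exact h
      -- tendsto w (𝓝[<] b) (𝓝 0)
      have hyb' : Tendsto y (nhdsWithin b (Set.Iio b)) (nhds 0) := by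
        have h0 : Tendsto y (nhds b) (nhds (y b)) := hyd.continuous.continuousAt
        rw [hyb] at h0
        exact h0.mono_left nhdsWithin_le_nhds
      have hy'b : Tendsto (fun x => deriv y x) (nhdsWithin b (Set.Iio b)) (nhds (deriv y b)) :=
        (hy1.continuous.continuousAt).continuousWithinAt
      have hU'b : Tendsto (fun x => deriv U x) (nhdsWithin b (Set.Iio b)) (nhds (deriv U b)) :=
        (hU1.continuous.continuousAt).continuousWithinAt
      have hsy : Tendsto (slope y b) (nhdsWithin b (Set.Iio b)) (nhds (deriv y b)) :=
        (hasDerivAt_iff_tendsto_slope.mp ((hyd b).hasDerivAt)).mono_left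
          (nhdsWithin_mono _ (fun x hx => ne_of_lt hx))
      have hsU : Tendsto (slope U b) (nhdsWithin b (Set.Iio b)) (nhds (deriv U b)) :=
        (hasDerivAt_iff_tendsto_slope.mp ((hUd b).hasDerivAt)).mono_left
          (nhdsWithin_mono _ (fun x hx => ne_of_lt hx))
      have htend : Tendsto w (nhdsWithin b (Set.Iio b)) (nhds 0) := by
        have hexpr : Tendsto (fun x => deriv y x * y x
            - deriv U x * (y x * (slope y b x / slope U b x)))
            (nhdsWithin b (Set.Iio b))
            (nhds (deriv y b * 0 - deriv U b * (0 * (deriv y b / deriv U b)))) :=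
          (hy'b.mul hyb').sub (hU'b.mul (hyb'.mul (hsy.div hsU hUb)))
        rw [show deriv y b * 0 - deriv U b * (0 * (deriv y b / deriv U b)) = 0 by ring] at hexpr
        apply hexpr.congr'
        filter_upwards [Ioo_mem_nhdsLT_of_mem (⟨hab, le_rfl⟩ : b ∈ Set.Ioc a b)] with x hx
        have hxb : x ≠ b := ne_of_lt hx.2
        have hax : U x - c ≠ 0 := sub_ne_zero.mpr (hnz x ⟨le_of_lt hx.1, hx.2⟩)
        have hslope : slope y b x / slope U b x = y x / (U x - c) := by
          rw [slope_def_field, slope_def_field, hyb, hUbc, sub_zero]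
          rw [div_div_div_eq]
          rw [mul_comm (y x) (x - b)]
          exact mul_div_mul_left _ _ (sub_ne_zero.mpr hxb)
        rw [hslope, hw]
        ring
      have hev : ∀ᶠ x in nhdsWithin b (Set.Iio b), w x1 ≤ w x := by
        filter_upwards [Ioo_mem_nhdsLT_of_mem (⟨hx1.2, le_rfl⟩ : b ∈ Set.Ioc x1 b)] with x hx
        exact hmono hx1 ⟨hx1.1.trans (le_of_lt hx.1), hx.2⟩ (le_of_lt hx.1)
      have : w x1 ≤ 0 := ge_of_tendsto htend hev
      linarith
    · -- nondegenerate: w b = 0, so w ≡ 0 by monotonicity on Icc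
      have hnz' : ∀ x ∈ Set.Icc a b, U x ≠ c := by
        intro x hx
        rcases eq_or_lt_of_le hx.2 with h | h
        · rw [h]; exact hUbc
        · exact hnz x ⟨hx.1, h⟩
      have hmono' : MonotoneOn w (Set.Icc a b) := by
        apply monotoneOn_of_deriv_nonneg (convex_Icc a b)
        · exact hwcont _ (fun x hx => hnz' x hx)
        · intro x hx
          rw [interior_Icc] at hx
          exact (hwderiv x hx).differentiableAt.differentiableWithinAt
        · intro x hx
          rw [interior_Icc] at hx
          rw [(hwderiv x hx).deriv]
          exact hgnn x
      have hwb : w b = 0 := by simp [hw, hyb]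
      intro x hx
      have h1 : w a ≤ w x := hmono' ⟨le_rfl, le_of_lt hab⟩ ⟨hx.1, le_of_lt hx.2⟩ hx.1
      have h2 : w x ≤ w b := hmono' ⟨hx.1, le_of_lt hx.2⟩ ⟨le_of_lt hab, le_rfl⟩ (le_of_lt hx.2)
      linarith [hwa, hwb]
  -- from w ≡ 0, get y ≡ 0 on Ioo a b via ξ = y/(U-c)
  have hxi0 : ∀ x ∈ Set.Ioo a b, y x = 0 := by
    have hxi' : ∀ x ∈ Set.Ioo a b, HasDerivAt (fun t => y t / (U t - c)) 0 x := by
      intro x hx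
      have hax : U x - c ≠ 0 := sub_ne_zero.mpr (hnz x ⟨le_of_lt hx.1, hx.2⟩)
      have hdw : deriv w x = 0 := by
        have hev : w =ᶠ[nhds x] (fun _ => 0) := by
          filter_upwards [Ioo_mem_nhds hx.1 hx.2] with t ht
          exact hw0 t ⟨le_of_lt ht.1, ht.2⟩
        rw [hev.deriv_eq, deriv_const]
      have hgx : g x = 0 := by rw [← (hwderiv x hx).deriv, hdw]
      simp only [hg] at hgx
      have hd0 : deriv y x - deriv U x * y x / (U x - c) = 0 := by
        have h1 : (deriv y x - deriv U x * y x / (U x - c)) ^ 2 ≤ 0 := by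
          nlinarith [sq_nonneg (k * y x), hgx]
        exact pow_eq_zero_iff (n := 2) (by norm_num) |>.mp (le_antisymm h1 (sq_nonneg _))
      have hdq : HasDerivAt (fun t => y t / (U t - c))
          ((deriv y x * (U x - c) - y x * deriv U x) / (U x - c) ^ 2) x :=
        ((hyd x).hasDerivAt).div (((hUd x).hasDerivAt).sub_const c) hax
      convert hdq using 1
      rw [eq_comm, div_eq_zero_iff]
      left
      field_simp at hd0
      linear_combination hd0
    intro x hx
    have hcont : ContinuousOn (fun t => y t / (U t - c)) (Set.Icc a x) := by
      apply ContinuousOn.div hyd.continuous.continuousOn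
        (hUd.continuous.sub continuous_const).continuousOn
      intro t ht
      exact sub_ne_zero.mpr (hnz t ⟨ht.1, lt_of_le_of_lt ht.2 hx.2⟩)
    obtain ⟨t, ht, hslope⟩ := exists_hasDerivAt_eq_slope (fun t => y t / (U t - c)) (fun _ => 0)
      hx.1 hcont (fun t ht => hxi' t ⟨ht.1, lt_trans ht.2 hx.2⟩)
    have hXa : y a / (U a - c) = 0 := by rw [hya]; simp
    have hax : U x - c ≠ 0 := sub_ne_zero.mpr (hnz x ⟨le_of_lt hx.1, hx.2⟩)
    rw [hXa, sub_zero] at hslope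
    have hxa : x - a ≠ 0 := sub_ne_zero.mpr (ne_of_gt hx.1)
    have h0 : y x / (U x - c) = 0 :=
      (div_eq_zero_iff.mp hslope.symm).resolve_right hxa
    exact (div_eq_zero_iff.mp h0).resolve_right hax
  -- conclude deriv y a = 0
  have hslope0 : Tendsto (slope y a) (nhdsWithin a (Set.Ioi a)) (nhds 0) := by
    have : (slope y a) =ᶠ[nhdsWithin a (Set.Ioi a)] (fun _ => 0) := by
      filter_upwards [Ioo_mem_nhdsGT_of_mem (⟨le_rfl, hab⟩ : a ∈ Set.Ico a b)] with t ht
      rw [slope_def_field, hxi0 t ht, hya]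
      simp
    exact Tendsto.congr' this.symm tendsto_const_nhds
  have hslope1 : Tendsto (slope y a) (nhdsWithin a (Set.Ioi a)) (nhds (deriv y a)) :=
    (hasDerivAt_iff_tendsto_slope.mp ((hyd a).hasDerivAt)).mono_left
      (nhdsWithin_mono _ (fun x hx => ne_of_gt hx))
  exact tendsto_nhds_unique hslope1 hslope0
theorem stmt3 (h k c : ℝ) (hh : 0 < h) (U : ℝ → ℝ) (hU : ContDiff ℝ 2 U)
    (hU' : ∀ x ∈ Set.Icc (-h) 0, 0 < deriv U x)
    (hc : c ∉ U '' Set.Ioo (-h) 0)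
    (x2l x2r x20 : ℝ) (hl : -h ≤ x2l) (hr : x2r ≤ 0) (hlr : x2l < x2r)
    (hcI : c ∉ U '' Set.Ioo x2l x2r)
    (y : ℝ → ℝ) (hy : ContDiff ℝ 2 y)
    (heq : ∀ x ∈ Set.Ioo x2l x2r,
      (U x - c) * (-(deriv (deriv y) x) + k ^ 2 * y x) + deriv (deriv U) x * y x = 0)
    (hx20 : x20 = x2l ∨ x20 = x2r)
    (hy0 : y x20 = 0) (hy1 : deriv y x20 ≠ 0) (hU20 : U x20 ≠ c) :
    ∀ x ∈ Set.Icc x2l x2r, x ≠ x20 → y x ≠ 0 := by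
  intro x hx hne h0
  have h21 : (2 : WithTop ℕ∞) = 1 + 1 := by norm_num
  have hUd : Differentiable ℝ U := hU.differentiable (by norm_num)
  have hyd : Differentiable ℝ y := hy.differentiable (by norm_num)
  have hU1 : ContDiff ℝ 1 (deriv U) := ((contDiff_succ_iff_deriv).mp (h21 ▸ hU)).2.2
  have hy1' : ContDiff ℝ 1 (deriv y) := ((contDiff_succ_iff_deriv).mp (h21 ▸ hy)).2.2
  have hUd1 : Differentiable ℝ (deriv U) := hU1.differentiable (by norm_num)
  have hyd1 : Differentiable ℝ (deriv y) := hy1'.differentiable (by norm_num)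
  have hxIcc : x ∈ Set.Icc (-h) 0 := ⟨le_trans hl hx.1, le_trans hx.2 hr⟩
  rcases hx20 with h20 | h20
  · -- x20 = left endpoint
    subst h20
    have hxl : x20 < x := lt_of_le_of_ne hx.1 (Ne.symm hne)
    apply hy1
    apply aux_left k c x20 x hxl U y hU hy
    · intro t ht
      rcases eq_or_lt_of_le ht.1 with hta | hta
      · rw [← hta]; exact hU20
      · intro hUt
        exact hcI ⟨t, ⟨hta, lt_of_lt_of_le ht.2 hx.2⟩, hUt⟩
    · intro t ht
      exact heq t ⟨ht.1, lt_of_lt_of_le ht.2 hx.2⟩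
    · exact hy0
    · exact h0
    · exact ne_of_gt (hU' x hxIcc)
  · -- x20 = right endpoint: reflect
    subst h20
    have hxr : x < x20 := lt_of_le_of_ne hx.2 hne
    set s : ℝ := x + x20 with hs
    set V : ℝ → ℝ := fun t => U (s - t) with hV
    set z : ℝ → ℝ := fun t => y (s - t) with hz
    have hrefl : ContDiff ℝ 2 (fun t : ℝ => s - t) := contDiff_const.sub contDiff_id
    have hVc : ContDiff ℝ 2 V := hU.comp hrefl
    have hzc : ContDiff ℝ 2 z := hy.comp hrefl
    have hlin : ∀ t : ℝ, HasDerivAt (fun u : ℝ => s - u) (-1) t := fun t => by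
      simpa using (hasDerivAt_id t).const_sub s
    have hzd : ∀ t, HasDerivAt z (-deriv y (s - t)) t := fun t => by
      have h2 := ((hyd (s - t)).hasDerivAt).comp t (hlin t)
      refine h2.congr_deriv ?_; ring
    have hVd : ∀ t, HasDerivAt V (-deriv U (s - t)) t := fun t => by
      have h2 := ((hUd (s - t)).hasDerivAt).comp t (hlin t)
      refine h2.congr_deriv ?_; ring
    have hzderiv : deriv z = fun t => -deriv y (s - t) := funext fun t => (hzd t).deriv
    have hVderiv : deriv V = fun t => -deriv U (s - t) := funext fun t => (hVd t).deriv
    have hzdd : ∀ t, deriv (deriv z) t = deriv (deriv y) (s - t) := by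
      intro t
      rw [hzderiv]
      have h2 := (((hyd1 (s - t)).hasDerivAt).comp t (hlin t)).neg
      have h3 : HasDerivAt (fun u => -deriv y (s - u)) (deriv (deriv y) (s - t)) t := by
        refine h2.congr_deriv ?_; ring
      exact h3.deriv
    have hVdd : ∀ t, deriv (deriv V) t = deriv (deriv U) (s - t) := by
      intro t
      rw [hVderiv]
      have h2 := (((hUd1 (s - t)).hasDerivAt).comp t (hlin t)).neg
      have h3 : HasDerivAt (fun u => -deriv U (s - u)) (deriv (deriv U) (s - t)) t := by
        refine h2.congr_deriv ?_; ring
      exact h3.deriv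
    have hsub : ∀ t ∈ Set.Ioo x x20, s - t ∈ Set.Ioo x x20 := by
      intro t ht
      constructor <;> simp only [hs] <;> [linarith [ht.2]; linarith [ht.1]]
    have key : deriv z x = 0 := by
      apply aux_left k c x x20 hxr V z hVc hzc
      · intro t ht
        rcases eq_or_lt_of_le ht.1 with hta | hta
        · have : s - t = x20 := by simp only [hs, ← hta]; ring
          simp only [hV, this]; exact hU20
        · intro hUt
          have hmem : s - t ∈ Set.Ioo x x20 := hsub t ⟨hta, ht.2⟩
          exact hcI ⟨s - t, ⟨lt_of_le_of_lt hx.1 hmem.1, hmem.2⟩, hUt⟩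
      · intro t ht
        have hmem : s - t ∈ Set.Ioo x2l x20 := by
          have := hsub t ht
          exact ⟨lt_of_le_of_lt hx.1 this.1, this.2⟩
        have := heq (s - t) hmem
        rw [hzdd t, hVdd t]
        exact this
      · show y (s - x) = 0
        have : s - x = x20 := by simp only [hs]; ring
        rw [this]; exact hy0
      · show y (s - x20) = 0
        have : s - x20 = x := by simp only [hs]; ring
        rw [this]; exact h0
      · rw [hVderiv]
        have : s - x20 = x := by simp only [hs]; ring
        simp only [this]
        exact neg_ne_zero.mpr (ne_of_gt (hU' x hxIcc))
    apply hy1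
    have : deriv z x = -deriv y x20 := by
      rw [hzderiv]
      show -deriv y (s - x) = -deriv y x20
      have hsx : s - x = x20 := by simp only [hs]; ring
      rw [hsx]
    rw [this] at key
    linarith [key]
end

section
/- Let U : [−h,0] → ℝ be C¹ with U' > 0, let c = c_R + i c_I ∈ ℂ with c_I ≠ 0 or c_R ∉ U([−h,0]), and suppose y ∈ C²([−h,0];ℂ) solves −y'' + (k² + U''/(U−c))y = 0 with y(−h) = 0 (and U ∈ C²). Writing z_± = y' ± |k|y, one has the monotonicity identity d/dx₂ (|z₊|² − |z₋|²) = 2|k|(|z₊|² + |z₋|²) + Re(β)|z₊ − z₋|², where β = U''/(|k|(U−c)); in particular, if Re β ≥ 0 on an interval and |z₊(x₂ₗ)| ≥ |z₋(x₂ₗ)| at its left endpoint, then |z₊(x₂)| ≥ |z₋(x₂)| throughout the interval. -/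
open Complex

private lemma normSq_hasDerivAt {g : ℝ → ℂ} {g' : ℂ} {x : ℝ} (hg : HasDerivAt g g' x) :
    HasDerivAt (fun s => ‖g s‖ ^ 2) (2 * (g' * (starRingEnd ℂ) (g x)).re) x := by
  have hre := Complex.reCLM.hasFDerivAt.comp_hasDerivAt x hg
  have him := Complex.imCLM.hasFDerivAt.comp_hasDerivAt x hg
  have h := (hre.pow 2).add (him.pow 2)
  have hfun : (fun s => ‖g s‖ ^ 2) = fun s => (g s).re ^ 2 + (g s).im ^ 2 := by
    funext s
    rw [Complex.sq_norm, Complex.normSq_apply]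
    ring
  rw [hfun]
  refine h.congr_deriv ?_
  simp [Complex.mul_re]
  ring

private lemma key_alg (κ : ℝ) (a b d β : ℂ) (hd : d = ((κ:ℂ)^2 + β) * a) :
    2 * ((d + (κ:ℂ) * b) * (starRingEnd ℂ) (b + (κ:ℂ) * a)).re -
      2 * ((d - (κ:ℂ) * b) * (starRingEnd ℂ) (b - (κ:ℂ) * a)).re =
    2 * κ * (‖b + (κ:ℂ) * a‖ ^ 2 + ‖b - (κ:ℂ) * a‖ ^ 2) +
      (β / (κ:ℂ)).re * ‖(b + (κ:ℂ) * a) - (b - (κ:ℂ) * a)‖ ^ 2 := by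
  by_cases hκ : κ = 0
  · subst hκ; simp
  · have h1 : ∀ z : ℂ, ‖z‖ ^ 2 = z.re * z.re + z.im * z.im := by
      intro z; rw [Complex.sq_norm, Complex.normSq_apply]
    rw [h1, h1, h1, Complex.div_ofReal_re]
    subst hd
    simp only [Complex.mul_re, Complex.mul_im, Complex.add_re, Complex.add_im,
      Complex.sub_re, Complex.sub_im, Complex.conj_re, Complex.conj_im,
      Complex.ofReal_re, Complex.ofReal_im, Complex.ofReal_pow, pow_two]
    field_simp
    ring

theorem stmt17 (h k : ℝ) (c : ℂ) (hh : 0 < h) (U : ℝ → ℝ) (hU : ContDiff ℝ 2 U)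
    (hU' : ∀ x ∈ Set.Icc (-h) 0, 0 < deriv U x)
    (hc : c.im ≠ 0 ∨ c.re ∉ U '' Set.Icc (-h) 0)
    (y : ℝ → ℂ) (hy : ContDiff ℝ 2 y) (hybc : y (-h) = 0)
    (heq : ∀ x ∈ Set.Icc (-h) 0,
      -(deriv (deriv y) x) +
        ((k ^ 2 : ℂ) + ((deriv (deriv U) x : ℝ) : ℂ) / ((U x : ℂ) - c)) * y x = 0) :
    (∀ x ∈ Set.Icc (-h) 0,
      deriv (fun s => ‖deriv y s + ((|k| : ℝ) : ℂ) * y s‖ ^ 2 - ‖deriv y s - ((|k| : ℝ) : ℂ) * y s‖ ^ 2) x =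
        2 * |k| * (‖deriv y x + ((|k| : ℝ) : ℂ) * y x‖ ^ 2 + ‖deriv y x - ((|k| : ℝ) : ℂ) * y x‖ ^ 2) +
          (((deriv (deriv U) x : ℝ) : ℂ) / (((|k| : ℝ) : ℂ) * ((U x : ℂ) - c))).re *
            ‖(deriv y x + ((|k| : ℝ) : ℂ) * y x) - (deriv y x - ((|k| : ℝ) : ℂ) * y x)‖ ^ 2) ∧
    (∀ x2l x2r : ℝ, -h ≤ x2l → x2l ≤ x2r → x2r ≤ 0 →
      (∀ x ∈ Set.Icc x2l x2r,
        0 ≤ (((deriv (deriv U) x : ℝ) : ℂ) / (((|k| : ℝ) : ℂ) * ((U x : ℂ) - c))).re) →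
      ‖deriv y x2l - ((|k| : ℝ) : ℂ) * y x2l‖ ≤ ‖deriv y x2l + ((|k| : ℝ) : ℂ) * y x2l‖ →
      ∀ x ∈ Set.Icc x2l x2r,
        ‖deriv y x - ((|k| : ℝ) : ℂ) * y x‖ ≤ ‖deriv y x + ((|k| : ℝ) : ℂ) * y x‖) := by
  set κ : ℝ := |k| with hκdef
  have hy1 : Differentiable ℝ y := hy.differentiable (by norm_num)
  have hy2 : ContDiff ℝ 1 (deriv y) :=
    (contDiff_succ_iff_deriv.mp (by exact_mod_cast hy : ContDiff ℝ ((1:ℕ)+1) y)).2.2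
  have hy2' : Differentiable ℝ (deriv y) := hy2.differentiable (by norm_num)
  -- derivative of the key quantity everywhere
  set F : ℝ → ℝ := fun s => ‖deriv y s + (κ:ℂ) * y s‖ ^ 2 - ‖deriv y s - (κ:ℂ) * y s‖ ^ 2 with hF
  have hgp : ∀ x : ℝ, HasDerivAt (fun s => deriv y s + (κ:ℂ) * y s)
      (deriv (deriv y) x + (κ:ℂ) * deriv y x) x := fun x =>
    (hy2' x).hasDerivAt.add ((hy1 x).hasDerivAt.const_mul _)
  have hgm : ∀ x : ℝ, HasDerivAt (fun s => deriv y s - (κ:ℂ) * y s)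
      (deriv (deriv y) x - (κ:ℂ) * deriv y x) x := fun x =>
    (hy2' x).hasDerivAt.sub ((hy1 x).hasDerivAt.const_mul _)
  have hdF : ∀ x : ℝ, HasDerivAt F
      (2 * ((deriv (deriv y) x + (κ:ℂ) * deriv y x) *
          (starRingEnd ℂ) (deriv y x + (κ:ℂ) * y x)).re -
       2 * ((deriv (deriv y) x - (κ:ℂ) * deriv y x) *
          (starRingEnd ℂ) (deriv y x - (κ:ℂ) * y x)).re) x := fun x =>
    (normSq_hasDerivAt (hgp x)).sub (normSq_hasDerivAt (hgm x))
  have part1 : ∀ x ∈ Set.Icc (-h) 0,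
      deriv F x =
        2 * κ * (‖deriv y x + (κ:ℂ) * y x‖ ^ 2 + ‖deriv y x - (κ:ℂ) * y x‖ ^ 2) +
          (((deriv (deriv U) x : ℝ) : ℂ) / ((κ:ℂ) * ((U x : ℂ) - c))).re *
            ‖(deriv y x + (κ:ℂ) * y x) - (deriv y x - (κ:ℂ) * y x)‖ ^ 2 := by
    intro x hx
    rw [(hdF x).deriv]
    have hd : deriv (deriv y) x =
        ((κ:ℂ)^2 + ((deriv (deriv U) x : ℝ) : ℂ) / ((U x : ℂ) - c)) * y x := by
      have := heq x hx
      have hk2 : ((κ:ℝ):ℂ)^2 = (k:ℂ)^2 := by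
        have : κ ^ 2 = k ^ 2 := _root_.sq_abs k
        exact_mod_cast congrArg (Complex.ofReal ·) this
      rw [hk2]
      linear_combination -this
    have := key_alg κ (y x) (deriv y x) (deriv (deriv y) x)
      (((deriv (deriv U) x : ℝ) : ℂ) / ((U x : ℂ) - c)) hd
    rw [this, div_mul_eq_div_div_swap]
  refine ⟨part1, ?_⟩
  intro x2l x2r hl hlr hr hRe hinit x hx
  have hsub : Set.Icc x2l x2r ⊆ Set.Icc (-h) 0 :=
    Set.Icc_subset_Icc hl hr
  have hmono : MonotoneOn F (Set.Icc x2l x2r) := by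
    apply monotoneOn_of_deriv_nonneg (convex_Icc _ _)
    · exact (Differentiable.continuous fun s => (hdF s).differentiableAt).continuousOn
    · exact fun s _ => (hdF s).differentiableAt.differentiableWithinAt
    · intro s hs
      rw [interior_Icc] at hs
      have hs' : s ∈ Set.Icc x2l x2r := Set.mem_Icc.mpr ⟨le_of_lt hs.1, le_of_lt hs.2⟩
      rw [part1 s (hsub hs')]
      have h1 : (0:ℝ) ≤ 2 * κ *
          (‖deriv y s + (κ:ℂ) * y s‖ ^ 2 + ‖deriv y s - (κ:ℂ) * y s‖ ^ 2) := by
        have : (0:ℝ) ≤ κ := abs_nonneg k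
        positivity
      have h2 : (0:ℝ) ≤
          (((deriv (deriv U) s : ℝ) : ℂ) / ((κ:ℂ) * ((U s : ℂ) - c))).re *
            ‖(deriv y s + (κ:ℂ) * y s) - (deriv y s - (κ:ℂ) * y s)‖ ^ 2 :=
        mul_nonneg (hRe s hs') (by positivity)
      linarith
  have h0 : 0 ≤ F x2l := by
    have := pow_le_pow_left₀ (norm_nonneg _) hinit 2
    simp only [hF]
    linarith
  have hFx : F x2l ≤ F x :=
    hmono (Set.mem_Icc.mpr ⟨le_refl _, hlr⟩) hx hx.1
  have hsq : ‖deriv y x - (κ:ℂ) * y x‖ ^ 2 ≤ ‖deriv y x + (κ:ℂ) * y x‖ ^ 2 := by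
    have : 0 ≤ F x := le_trans h0 hFx
    simp only [hF] at this
    linarith
  exact (pow_le_pow_iff_left₀ (norm_nonneg _) (norm_nonneg _) (by norm_num)).mp hsq
end
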